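/- Fix k > −1/2. For any sequence of complex numbers ρ_n = β_n + iγ_n with β_n ∈ [0,1] and γ_n > 0 such that Σ_n γ_n^{−k−3/2} < ∞, and any N ≥ 1, the sum Σ_n γ_n^{β_n − 1/2} · N^{k+1+β_n} · ∫_1^∞ exp(−γ_n arctan(1/u)) u^{−k−2−β_n} du converges and is bounded by C_k · N^{k+2} · Σ_n γ_n^{−k−3/2}. -/

import Mathlib

open MeasureTheory Real

lemma arctan_half_aux {x : ℝ} (h0 : 0 ≤ x) (h1 : x ≤ 1) : x / 2 ≤ Real.arctan x := by
  have key : MonotoneOn (fun y : ℝ => Real.arctan y - y / 2) (Set.Icc 0 1) := by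
    apply monotoneOn_of_deriv_nonneg (convex_Icc 0 1)
    · exact (Real.continuous_arctan.sub (continuous_id.div_const 2)).continuousOn
    · intro y _
      exact ((Real.differentiableAt_arctan y).sub
        (differentiableAt_id.div_const 2)).differentiableWithinAt
    · intro y hy
      rw [interior_Icc] at hy
      have hd : HasDerivAt (fun y : ℝ => Real.arctan y - y / 2)
          (1 / (1 + y ^ 2) - 1 / 2) y :=
        (Real.hasDerivAt_arctan y).sub ((hasDerivAt_id y).div_const 2)
      rw [hd.deriv]
      have h2 : 1 + y ^ 2 ≤ 2 := by nlinarith [hy.1.le, hy.2.le]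
      have h3 : (0:ℝ) < 1 + y ^ 2 := by positivity
      have h4 : (1:ℝ)/2 ≤ 1 / (1 + y ^ 2) := by
        rw [div_le_div_iff₀ (by norm_num) h3]; linarith
      linarith
  have h := key (Set.left_mem_Icc.2 zero_le_one) ⟨h0, h1⟩ h0
  simp only [Real.arctan_zero] at h
  linarith

lemma term_bound_aux (k : ℝ) (hk : -(1 / 2) < k) :
    ∃ C : ℝ, 0 < C ∧ ∀ β : ℝ, β ∈ Set.Icc (0:ℝ) 1 → ∀ γ : ℝ, 0 < γ → ∀ N : ℝ, 1 ≤ N →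
      γ ^ (β - 1 / 2) * N ^ (k + 1 + β) *
        ∫ u in Set.Ioi (1 : ℝ),
          Real.exp (-γ * Real.arctan (1 / u)) * u ^ (-k - 2 - β) ≤
      C * N ^ (k + 2) * γ ^ (-k - 3 / 2) := by
  set m : ℕ := ⌈k + 3⌉₊ with hm
  set C : ℝ := (m.factorial : ℝ) * 2 ^ m + 4 with hC
  have hC0 : (0:ℝ) < C := by positivity
  have hC2 : (2:ℝ) ≤ C := by
    have : (0:ℝ) ≤ (m.factorial : ℝ) * 2 ^ m := by positivity
    simp only [hC]; linarith
  refine ⟨C, hC0, ?_⟩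
  rintro β ⟨hβ0, hβ1⟩ γ hγ N hN
  have hmk : k + 3 ≤ (m : ℝ) := Nat.le_ceil _
  have hkβ : (0:ℝ) < k + 1 + β := by linarith
  have he : -k - 2 - β < -1 := by linarith
  set f : ℝ → ℝ := fun u => Real.exp (-γ * Real.arctan (1 / u)) * u ^ (-k - 2 - β) with hf
  have hcont : ContinuousOn f (Set.Ioi (0:ℝ)) := by
    apply ContinuousOn.mul
    · exact Real.continuous_exp.comp_continuousOn
        (continuousOn_const.mul (Real.continuous_arctan.comp_continuousOn
          (continuousOn_const.div continuousOn_id fun x hx => ne_of_gt hx)))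
    · exact fun x hx => (Real.continuousAt_rpow_const x _ (Or.inl (ne_of_gt hx))).continuousWithinAt
  have hsub : Set.Ioi (1:ℝ) ⊆ Set.Ioi (0:ℝ) := Set.Ioi_subset_Ioi zero_le_one
  have hf_nonneg : ∀ u : ℝ, 0 < u → 0 ≤ f u := fun u hu =>
    mul_nonneg (Real.exp_nonneg _) (Real.rpow_nonneg hu.le _)
  have hfle : ∀ u : ℝ, 0 < u → f u ≤ u ^ (-k - 2 - β) := by
    intro u hu
    have h1 : 0 ≤ Real.arctan (1/u) := by
      have := Real.arctan_strictMono.monotone (le_of_lt (by positivity : (0:ℝ) < 1/u))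
      simpa [Real.arctan_zero] using this
    have h2 : Real.exp (-γ * Real.arctan (1/u)) ≤ 1 :=
      Real.exp_le_one_iff.2 (mul_nonpos_of_nonpos_of_nonneg (by linarith) h1)
    exact mul_le_of_le_one_left (Real.rpow_nonneg hu.le _) h2
  have hmeas : AEStronglyMeasurable f (volume.restrict (Set.Ioi (1:ℝ))) :=
    (hcont.mono hsub).aestronglyMeasurable measurableSet_Ioi
  have hInt : IntegrableOn f (Set.Ioi (1:ℝ)) := by
    refine (integrableOn_Ioi_rpow_of_lt he one_pos).mono' hmeas ?_
    refine (ae_restrict_iff' measurableSet_Ioi).2 (Filter.Eventually.of_forall fun u hu => ?_)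
    have hu0 : (0:ℝ) < u := lt_trans one_pos hu
    rw [Real.norm_eq_abs, abs_of_nonneg (hf_nonneg u hu0)]
    exact hfle u hu0
  have hI0 : 0 ≤ ∫ u in Set.Ioi (1:ℝ), f u :=
    setIntegral_nonneg measurableSet_Ioi fun u hu => hf_nonneg u (lt_trans one_pos hu)
  have hA0 : 0 ≤ γ ^ (β - 1/2) := Real.rpow_nonneg hγ.le _
  have hN0 : (0:ℝ) < N := lt_of_lt_of_le one_pos hN
  have hB0 : 0 ≤ N ^ (k + 1 + β) := Real.rpow_nonneg hN0.le _
  have hB'0 : 0 ≤ N ^ (k + 2) := Real.rpow_nonneg hN0.le _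
  have hNe : N ^ (k + 1 + β) ≤ N ^ (k + 2) :=
    Real.rpow_le_rpow_of_exponent_le hN (by linarith)
  rcases le_or_gt γ 1 with hγ1 | hγ1
  · -- small γ
    have hIb : (∫ u in Set.Ioi (1:ℝ), f u) ≤ ∫ u in Set.Ioi (1:ℝ), u ^ (-k - 2 - β) :=
      setIntegral_mono_on hInt (integrableOn_Ioi_rpow_of_lt he one_pos) measurableSet_Ioi
        fun u hu => hfle u (lt_trans one_pos hu)
    have hval : (∫ u in Set.Ioi (1:ℝ), (u:ℝ) ^ (-k - 2 - β)) ≤ 2 := by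
      rw [integral_Ioi_rpow_of_lt he one_pos, Real.one_rpow]
      rw [div_le_iff_of_neg (by linarith : (-k - 2 - β + 1 : ℝ) < 0)]
      linarith
    have hI2 : (∫ u in Set.Ioi (1:ℝ), f u) ≤ 2 := hIb.trans hval
    have hγe : γ ^ (β - 1/2) ≤ γ ^ (-k - 3/2) :=
      Real.rpow_le_rpow_of_exponent_ge hγ hγ1 (by linarith)
    have hg0 : 0 ≤ γ ^ (-k - 3/2) := Real.rpow_nonneg hγ.le _
    have hmain : γ ^ (β - 1/2) * N ^ (k + 1 + β) * ∫ u in Set.Ioi (1:ℝ), f u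
        ≤ γ ^ (-k - 3/2) * N ^ (k + 2) * 2 :=
      mul_le_mul (mul_le_mul hγe hNe hB0 hg0) hI2 hI0 (by positivity)
    refine hmain.trans ?_
    nlinarith [mul_nonneg hg0 hB'0]
  · -- large γ
    have hγ1' : (1:ℝ) ≤ γ := hγ1.le
    have hunion : Set.Ioc (1:ℝ) γ ∪ Set.Ioi γ = Set.Ioi (1:ℝ) := Set.Ioc_union_Ioi_eq_Ioi hγ1'
    have hInt1 : IntegrableOn f (Set.Ioc (1:ℝ) γ) :=
      hInt.mono_set (by rw [← hunion]; exact Set.subset_union_left)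
    have hInt2 : IntegrableOn f (Set.Ioi γ) :=
      hInt.mono_set (by rw [← hunion]; exact Set.subset_union_right)
    have hsplit : (∫ u in Set.Ioi (1:ℝ), f u)
        = (∫ u in Set.Ioc (1:ℝ) γ, f u) + ∫ u in Set.Ioi γ, f u := by
      rw [← hunion]
      exact setIntegral_union Set.Ioc_disjoint_Ioi_same measurableSet_Ioi hInt1 hInt2
    -- piece 2
    have hp2 : (∫ u in Set.Ioi γ, f u) ≤ 2 * γ ^ (-k - 1 - β) := by
      have h1 : (∫ u in Set.Ioi γ, f u) ≤ ∫ u in Set.Ioi γ, u ^ (-k - 2 - β) :=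
        setIntegral_mono_on hInt2 (integrableOn_Ioi_rpow_of_lt he hγ) measurableSet_Ioi
          fun u hu => hfle u (lt_trans hγ hu)
      rw [integral_Ioi_rpow_of_lt he hγ] at h1
      refine h1.trans ?_
      rw [div_le_iff_of_neg (by linarith : (-k - 2 - β + 1 : ℝ) < 0)]
      rw [show (-k - 2 - β + 1 : ℝ) = -k - 1 - β from by ring]
      nlinarith [Real.rpow_nonneg hγ.le (-k - 1 - β)]
    -- piece 1
    set c : ℝ := (m.factorial : ℝ) * (2 ^ m * (γ ^ (-(m:ℝ)) * γ ^ ((m:ℝ) - k - 2 - β))) with hc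
    have hbound : ∀ u ∈ Set.Ioc (1:ℝ) γ, ‖f u‖ ≤ c := by
      intro u hu
      have hu0 : (0:ℝ) < u := lt_trans one_pos hu.1
      have hx : (0:ℝ) < γ / (2 * u) := by positivity
      have harc : (1/u) / 2 ≤ Real.arctan (1/u) :=
        arctan_half_aux (by positivity) (by rw [div_le_one hu0]; exact hu.1.le)
      have hexp : Real.exp (-γ * Real.arctan (1 / u)) ≤ Real.exp (-(γ / (2 * u))) := by
        apply Real.exp_le_exp.2
        have h5 : γ / (2*u) ≤ γ * Real.arctan (1/u) := by
          calc γ / (2*u) = γ * ((1/u)/2) := by ring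
          _ ≤ γ * Real.arctan (1/u) := mul_le_mul_of_nonneg_left harc hγ.le
        linarith
      have hexp2 : Real.exp (-(γ / (2*u))) ≤ (m.factorial : ℝ) * (2*u/γ) ^ m := by
        have h1 : (γ/(2*u)) ^ m / (m.factorial : ℝ) ≤ Real.exp (γ/(2*u)) :=
          Real.pow_div_factorial_le_exp (γ/(2*u)) hx.le m
        have hxm : (0:ℝ) < (γ/(2*u)) ^ m / (m.factorial : ℝ) := by positivity
        have h2 := inv_anti₀ hxm h1
        rw [Real.exp_neg]
        refine h2.trans_eq ?_
        rw [inv_div, div_pow, div_pow]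
        field_simp
      have hfu : f u ≤ (m.factorial : ℝ) * ((2*u/γ) ^ m * u ^ (-k - 2 - β)) := by
        have h6 := mul_le_mul_of_nonneg_right (hexp.trans hexp2) (Real.rpow_nonneg hu0.le (-k - 2 - β))
        calc f u = Real.exp (-γ * Real.arctan (1 / u)) * u ^ (-k - 2 - β) := rfl
        _ ≤ (m.factorial : ℝ) * (2*u/γ) ^ m * u ^ (-k - 2 - β) := h6
        _ = (m.factorial : ℝ) * ((2*u/γ) ^ m * u ^ (-k - 2 - β)) := by ring
      have hp : (2*u/γ) ^ m * u ^ (-k - 2 - β)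
          ≤ 2 ^ m * (γ ^ (-(m:ℝ)) * γ ^ ((m:ℝ) - k - 2 - β)) := by
        have h1 : ((2*u/γ) ^ m : ℝ) = 2 ^ m * (γ ^ (-(m:ℝ)) * u ^ ((m:ℝ))) := by
          rw [← Real.rpow_natCast (2*u/γ) m, Real.div_rpow (by positivity) hγ.le,
            Real.mul_rpow (by norm_num) hu0.le, Real.rpow_neg hγ.le,
            Real.rpow_natCast 2 m, Real.rpow_natCast γ m, div_eq_mul_inv]
          ring
        rw [h1, mul_assoc, mul_assoc]
        refine mul_le_mul_of_nonneg_left ?_ (by positivity)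
        refine mul_le_mul_of_nonneg_left ?_ (Real.rpow_nonneg hγ.le _)
        rw [← Real.rpow_add hu0, show ((m:ℝ) + (-k - 2 - β)) = (m:ℝ) - k - 2 - β from by ring]
        exact Real.rpow_le_rpow hu0.le hu.2 (by linarith)
      rw [Real.norm_eq_abs, abs_of_nonneg (hf_nonneg u hu0)]
      calc f u ≤ (m.factorial : ℝ) * ((2*u/γ) ^ m * u ^ (-k - 2 - β)) := hfu
      _ ≤ c := by
          rw [hc]
          exact mul_le_mul_of_nonneg_left hp (by positivity)
    have hμ : volume (Set.Ioc (1:ℝ) γ) < ⊤ := measure_Ioc_lt_top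
    have hmeas1 : AEStronglyMeasurable f (volume.restrict (Set.Ioc (1:ℝ) γ)) :=
      (hcont.mono (fun x hx => lt_trans one_pos hx.1)).aestronglyMeasurable measurableSet_Ioc
    have hnorm := norm_setIntegral_le_of_norm_le_const hμ hbound
    have hc0 : 0 ≤ c := by
      rw [hc]; positivity
    have hp1 : (∫ u in Set.Ioc (1:ℝ) γ, f u) ≤ (m.factorial : ℝ) * 2 ^ m * γ ^ (-k - 1 - β) := by
      have h1 : (∫ u in Set.Ioc (1:ℝ) γ, f u) ≤ c * (γ - 1) := by
        have := (le_abs_self _).trans hnorm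
        rwa [measureReal_def, Real.volume_Ioc, ENNReal.toReal_ofReal (by linarith)] at this
      have h2 : c * (γ - 1) ≤ c * γ := by nlinarith
      refine h1.trans (h2.trans_eq ?_)
      have hpow : γ ^ (-(m:ℝ)) * γ ^ ((m:ℝ) - k - 2 - β) * γ = γ ^ (-k - 1 - β) := by
        rw [← Real.rpow_add hγ, ← Real.rpow_add_one hγ.ne']
        congr 1; ring
      rw [hc, show (m.factorial : ℝ) * (2 ^ m * (γ ^ (-(m:ℝ)) * γ ^ ((m:ℝ) - k - 2 - β))) * γ
          = (m.factorial : ℝ) * 2 ^ m * (γ ^ (-(m:ℝ)) * γ ^ ((m:ℝ) - k - 2 - β) * γ) from by ring,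
        hpow]
    -- combine
    have hIc : (∫ u in Set.Ioi (1:ℝ), f u)
        ≤ ((m.factorial : ℝ) * 2 ^ m + 2) * γ ^ (-k - 1 - β) := by
      rw [hsplit]
      have := add_le_add hp1 hp2
      linarith [this]
    have hmain : γ ^ (β - 1/2) * N ^ (k + 1 + β) * ∫ u in Set.Ioi (1:ℝ), f u
        ≤ γ ^ (β - 1/2) * N ^ (k + 2) * (((m.factorial : ℝ) * 2 ^ m + 2) * γ ^ (-k - 1 - β)) :=
      mul_le_mul (mul_le_mul_of_nonneg_left hNe hA0) hIc hI0 (by positivity)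
    refine hmain.trans ?_
    have heq : γ ^ (β - 1/2) * N ^ (k + 2) * (((m.factorial : ℝ) * 2 ^ m + 2) * γ ^ (-k - 1 - β))
        = ((m.factorial : ℝ) * 2 ^ m + 2) * N ^ (k + 2) * γ ^ (-k - 3/2) := by
      rw [show γ ^ (β - 1/2) * N ^ (k + 2) * (((m.factorial : ℝ) * 2 ^ m + 2) * γ ^ (-k - 1 - β))
          = ((m.factorial : ℝ) * 2 ^ m + 2) * N ^ (k + 2) * (γ ^ (β - 1/2) * γ ^ (-k - 1 - β))
          from by ring, ← Real.rpow_add hγ,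
        show (β - 1/2 + (-k - 1 - β)) = -k - 3/2 from by ring]
    rw [heq]
    have hg0 : 0 ≤ γ ^ (-k - 3/2) := Real.rpow_nonneg hγ.le _
    have hCle : (m.factorial : ℝ) * 2 ^ m + 2 ≤ C := by simp only [hC]; linarith
    exact mul_le_mul_of_nonneg_right (mul_le_mul_of_nonneg_right hCle hB'0) hg0

theorem stmt13 (k : ℝ) (hk : -(1 / 2) < k) :
    ∃ C : ℝ, 0 < C ∧ ∀ (β γ : ℕ → ℝ),
      (∀ n, β n ∈ Set.Icc (0 : ℝ) 1) → (∀ n, 0 < γ n) →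
      Summable (fun n => γ n ^ (-k - 3 / 2)) →
      ∀ N : ℝ, 1 ≤ N →
      Summable (fun n => γ n ^ (β n - 1 / 2) * N ^ (k + 1 + β n) *
        ∫ u in Set.Ioi (1 : ℝ),
          Real.exp (-γ n * Real.arctan (1 / u)) * u ^ (-k - 2 - β n)) ∧
      (∑' n, γ n ^ (β n - 1 / 2) * N ^ (k + 1 + β n) *
        ∫ u in Set.Ioi (1 : ℝ),
          Real.exp (-γ n * Real.arctan (1 / u)) * u ^ (-k - 2 - β n)) ≤
        C * N ^ (k + 2) * ∑' n, γ n ^ (-k - 3 / 2) := by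
  obtain ⟨C, hC, hbound⟩ := term_bound_aux k hk
  refine ⟨C, hC, ?_⟩
  intro β γ hβ hγ hsum N hN
  set T : ℕ → ℝ := fun n => γ n ^ (β n - 1 / 2) * N ^ (k + 1 + β n) *
      ∫ u in Set.Ioi (1 : ℝ),
        Real.exp (-γ n * Real.arctan (1 / u)) * u ^ (-k - 2 - β n) with hT
  have hN0 : (0:ℝ) < N := lt_of_lt_of_le one_pos hN
  have hTnn : ∀ n, 0 ≤ T n := by
    intro n
    refine mul_nonneg (mul_nonneg (Real.rpow_nonneg (hγ n).le _) (Real.rpow_nonneg hN0.le _)) ?_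
    exact setIntegral_nonneg measurableSet_Ioi fun u hu =>
      mul_nonneg (Real.exp_nonneg _) (Real.rpow_nonneg (le_of_lt (lt_trans one_pos hu)) _)
  have hTle : ∀ n, T n ≤ C * N ^ (k + 2) * γ n ^ (-k - 3 / 2) := fun n =>
    hbound (β n) (hβ n) (γ n) (hγ n) N hN
  have hsum2 : Summable (fun n => C * N ^ (k + 2) * γ n ^ (-k - 3 / 2)) :=
    hsum.mul_left (C * N ^ (k + 2))
  have hS : Summable T := Summable.of_nonneg_of_le hTnn hTle hsum2
  refine ⟨hS, ?_⟩
  calc (∑' n, T n) ≤ ∑' n, C * N ^ (k + 2) * γ n ^ (-k - 3 / 2) := Summable.tsum_le_tsum hTle hS hsum2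
  _ = C * N ^ (k + 2) * ∑' n, γ n ^ (-k - 3 / 2) := tsum_mul_left
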